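/- arXiv:2006.08120 — 2 statements merged into one kernel-verified Lean document; each statement's English description precedes it below -/
import Mathlib

section
/- For every integer n ≥ 0 there exists a polynomial P_n in three variables with nonnegative integer coefficients such that, in K, μ_n · ∏_{k=1}^{n+1} [ν+k]_q^{⌊(n+1)/k⌋} = Q^n · [ν+1]_q · P_n(q, Q, [ν]_q). Equivalently (Theorem 1.4, the conjecture of Delest and Fédou): in the expansion J_{ν+1}((1−q)z;q^{−1})/J_ν((1−q)z;q^{−1}) = −∑_{n≥1} (N_{n,ν}(q)/D_{n,ν}(q)) q^{(ν+1)n} z^{2n−1} with D_{n,ν}(q) = ∏_{k=1}^{n} [k+ν]_q^{⌊n/k⌋}, every numerator N_{n,ν}(q) is a polynomial in q, q^ν and [ν]_q with nonnegative integer coefficients. -/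
/- Let `K` be the fraction field of `ℚ[q,Q]`, where `Q` plays the role of `q^ν`.
`θν` and `θν1` are the series `θ_ν` and `θ_{ν+1}` of the Hahn–Exton `q`-Bessel
functions, and `μ n` are the coefficients of `θ_{ν+1}/θ_ν`. -/

noncomputable section

abbrev K : Type := FractionRing (MvPolynomial (Fin 2) ℚ)

def qv : K := algebraMap (MvPolynomial (Fin 2) ℚ) K (MvPolynomial.X 0)

def Qv : K := algebraMap (MvPolynomial (Fin 2) ℚ) K (MvPolynomial.X 1)

/-- The q-Pochhammer symbol `(a;q)_n`. -/
def qPoch (a : K) (n : ℕ) : K := ∏ j ∈ Finset.range n, (1 - a * qv ^ j)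

/-- `[ν+k]_q = (1 - Q q^k)/(1-q)`. -/
def brk (k : ℕ) : K := (1 - Qv * qv ^ k) / (1 - qv)

/-- `[ν]_q = (1 - Q)/(1-q)`. -/
def brNu : K := (1 - Qv) / (1 - qv)

/-- `θ_ν(x)`. -/
def θν : PowerSeries K :=
  PowerSeries.mk fun n =>
    (-1) ^ n * qv ^ (n * (n - 1) / 2) * Qv ^ n * (1 - qv) ^ (2 * n)
      / (qPoch qv n * qPoch (Qv * qv) n)

/-- `θ_{ν+1}(x)`, i.e. `θ_ν` with `Q` replaced by `Qq`. -/
def θν1 : PowerSeries K :=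
  PowerSeries.mk fun n =>
    (-1) ^ n * qv ^ (n * (n - 1) / 2) * (Qv * qv) ^ n * (1 - qv) ^ (2 * n)
      / (qPoch qv n * qPoch (Qv * qv ^ 2) n)

/-- The coefficients `μ_n` of `θ_{ν+1}(x)/θ_ν(x)`. -/
def μ (n : ℕ) : K := PowerSeries.coeff n (θν1 * θν⁻¹)

/-! ### Auxiliary nonvanishing lemmas -/

lemma algMap_ne (p : MvPolynomial (Fin 2) ℚ) (v : Fin 2 → ℚ) (h : MvPolynomial.eval v p ≠ 0) :
    algebraMap (MvPolynomial (Fin 2) ℚ) K p ≠ 0 := by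
  intro h0
  have h1 : p = 0 := IsFractionRing.injective (MvPolynomial (Fin 2) ℚ) K (by rw [h0, map_zero])
  exact h (by simp [h1])

lemma one_sub_q_pow_ne (m : ℕ) : (1:K) - qv ^ (m+1) ≠ 0 := by
  have : (1:K) - qv ^ (m+1) =
      algebraMap (MvPolynomial (Fin 2) ℚ) K (1 - MvPolynomial.X 0 ^ (m+1)) := by
    simp [qv, map_sub, map_pow]
  rw [this]; exact algMap_ne _ (fun _ => 0) (by simp)

lemma one_sub_q_ne : (1:K) - qv ≠ 0 := by simpa using one_sub_q_pow_ne 0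

lemma one_sub_Qq_ne (m : ℕ) : (1:K) - Qv * qv ^ m ≠ 0 := by
  have : (1:K) - Qv * qv ^ m =
      algebraMap (MvPolynomial (Fin 2) ℚ) K (1 - MvPolynomial.X 1 * MvPolynomial.X 0 ^ m) := by
    simp [qv, Qv, map_sub, map_pow, map_mul]
  rw [this]; exact algMap_ne _ (fun _ => 0) (by simp)

lemma qv_ne : (qv:K) ≠ 0 := by
  rw [qv]; exact algMap_ne _ (fun _ => 1) (by simp)

lemma Qv_ne : (Qv:K) ≠ 0 := by
  rw [Qv]; exact algMap_ne _ (fun _ => 1) (by simp)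

lemma qPoch_q_ne (n : ℕ) : qPoch qv n ≠ 0 := by
  refine Finset.prod_ne_zero_iff.2 fun j _ => ?_
  have : (1:K) - qv * qv ^ j = 1 - qv ^ (j+1) := by ring
  rw [this]; exact one_sub_q_pow_ne j

lemma qPoch_Qq_ne (n : ℕ) : qPoch (Qv * qv) n ≠ 0 := by
  refine Finset.prod_ne_zero_iff.2 fun j _ => ?_
  have : (1:K) - Qv * qv * qv ^ j = 1 - Qv * qv ^ (j+1) := by ring
  rw [this]; exact one_sub_Qq_ne (j+1)

lemma qPoch_Qq2_ne (n : ℕ) : qPoch (Qv * qv ^ 2) n ≠ 0 := by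
  refine Finset.prod_ne_zero_iff.2 fun j _ => ?_
  have : (1:K) - Qv * qv ^ 2 * qv ^ j = 1 - Qv * qv ^ (j+2) := by ring
  rw [this]; exact one_sub_Qq_ne (j+2)

lemma brk_ne (k : ℕ) : brk k ≠ 0 := div_ne_zero (one_sub_Qq_ne k) one_sub_q_ne

lemma brNu_mul : brNu * (1 - qv) = 1 - Qv := by
  rw [brNu]; exact div_mul_cancel₀ _ one_sub_q_ne

lemma brk_mul (k : ℕ) : brk k * (1 - qv) = 1 - Qv * qv ^ k := by
  rw [brk]; exact div_mul_cancel₀ _ one_sub_q_ne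

lemma brk_eq (k : ℕ) : brk k = (∑ i ∈ Finset.range k, qv ^ i) + qv ^ k * brNu := by
  rw [brk, div_eq_iff one_sub_q_ne]
  have h := geom_sum_mul qv k
  linear_combination h - qv^k * brNu_mul

/-! ### Coefficient identities -/

lemma tri_succ (m : ℕ) : (m+1) * m / 2 = m * (m-1) / 2 + m := by
  cases m with
  | zero => rfl
  | succ j =>
    simp only [Nat.add_sub_cancel]
    have h : (j+1+1) * (j+1) = (j+1) * j + 2 * (j+1) := by ring
    rw [h, Nat.add_mul_div_left _ _ (by norm_num : (0:ℕ) < 2)]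

lemma qPoch_succ (a : K) (m : ℕ) : qPoch a (m+1) = qPoch a m * (1 - a * qv ^ m) :=
  Finset.prod_range_succ _ _

lemma qPoch_succ' (a : K) (m : ℕ) : qPoch a (m+1) = (1 - a) * qPoch (a * qv) m := by
  rw [qPoch, Finset.prod_range_succ']
  simp only [pow_zero, mul_one]
  rw [mul_comm]
  congr 1
  rw [qPoch]
  refine Finset.prod_congr rfl fun j _ => ?_
  ring

lemma key1 (m : ℕ) :
    (1 - Qv*qv) * (qv^(m+1) - 1) * (PowerSeries.coeff (m+1) θν)
      = Qv * (1-qv)^2 * (PowerSeries.coeff m θν1) := by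
  simp only [θν, θν1, PowerSeries.coeff_mk]
  rw [show qPoch (Qv*qv) (m+1) = (1 - Qv*qv) * qPoch (Qv*qv*qv) m from qPoch_succ' _ m]
  rw [show Qv*qv*qv = Qv*qv^2 by ring]
  rw [qPoch_succ qv m]
  rw [show (m+1) * ((m+1) - 1) / 2 = m * (m-1) / 2 + m by simpa using tri_succ m]
  have h1 := qPoch_q_ne m
  have h2 := qPoch_Qq2_ne m
  have h3 := one_sub_Qq_ne 1
  have h4 : (1:K) - qv*qv^m ≠ 0 := by
    have : (1:K) - qv*qv^m = 1 - qv^(m+1) := by ring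
    rw [this]; exact one_sub_q_pow_ne m
  rw [show (1:K) - Qv*qv^1 = 1 - Qv*qv by ring] at h3
  field_simp
  ring

lemma poch_shift (n : ℕ) :
    qPoch (Qv*qv) n * (1 - Qv*qv^(n+1)) = (1 - Qv*qv) * qPoch (Qv*qv^2) n := by
  have h1 : qPoch (Qv*qv) (n+1) = qPoch (Qv*qv) n * (1 - Qv*qv*qv^n) := qPoch_succ _ n
  have h2 : qPoch (Qv*qv) (n+1) = (1 - Qv*qv) * qPoch (Qv*qv*qv) n := qPoch_succ' _ n
  rw [show Qv*qv*qv = Qv*qv^2 by ring] at h2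
  rw [show (1:K) - Qv*qv^(n+1) = 1 - Qv*qv*qv^n by ring]
  rw [← h1, h2]

lemma key4 (n : ℕ) :
    (1 - Qv*qv^(n+1)) * (PowerSeries.coeff n θν1)
      = qv^n * (1 - Qv*qv) * (PowerSeries.coeff n θν) := by
  simp only [θν, θν1, PowerSeries.coeff_mk]
  have h1 := qPoch_q_ne n
  have h2 := qPoch_Qq2_ne n
  have h3 := qPoch_Qq_ne n
  rw [mul_div_assoc', mul_div_assoc', div_eq_div_iff (mul_ne_zero h1 h2) (mul_ne_zero h1 h3)]
  linear_combination ((-1)^n * qv^(n*(n-1)/2) * Qv^n * qv^n * (1-qv)^(2*n) * qPoch qv n) *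
    poch_shift n

/-! ### Power series relations -/

open PowerSeries

lemma const_θν : constantCoeff θν = 1 := by
  rw [← coeff_zero_eq_constantCoeff]
  simp [θν, qPoch]

lemma const_θν1 : constantCoeff θν1 = 1 := by
  rw [← coeff_zero_eq_constantCoeff]
  simp [θν1, qPoch]

lemma θν_ne : θν ≠ 0 := by
  intro h
  have h1 := const_θν
  rw [h, map_zero] at h1
  exact one_ne_zero h1.symm

lemma coeff_hs (n : ℕ) : PowerSeries.coeff n (θν1 * θν⁻¹) = μ n := rfl

lemma R1 : (C (1 - Qv*qv)) * rescale qv θν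
    = (C (1 - Qv*qv)) * θν + (C (Qv*(1-qv)^2)) * (X * θν1) := by
  ext n
  cases n with
  | zero =>
    simp only [map_add, coeff_C_mul, coeff_rescale, pow_zero, one_mul,
      coeff_zero_eq_constantCoeff, map_mul, constantCoeff_X, zero_mul, mul_zero, add_zero]
  | succ m =>
    simp only [map_add, coeff_C_mul, coeff_rescale, coeff_succ_X_mul]
    linear_combination key1 m

lemma R4 : θν1 - rescale qv θν1 = (C (1 - Qv*qv)) * (rescale qv θν - rescale qv θν1) := by
  rw [mul_sub]
  ext n
  simp only [sub_mul, map_sub, map_one, one_mul, coeff_C_mul, coeff_rescale]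
  linear_combination key4 n

lemma hs_mul : (θν1 * θν⁻¹) * θν = θν1 := by
  rw [mul_assoc, PowerSeries.inv_mul_cancel θν (by rw [const_θν]; exact one_ne_zero), mul_one]

lemma μ_zero : μ 0 = 1 := by
  rw [μ, PowerSeries.coeff_zero_eq_constantCoeff, map_mul, const_θν1,
    PowerSeries.constantCoeff_inv, const_θν]
  norm_num

/-- weight coefficients appearing in the recurrence -/
def w : ℕ → K
  | 0 => 1
  | (j+1) => Qv * qv^(j+2) * μ (j+1)

def W : PowerSeries K := PowerSeries.mk w

lemma W_eq : W = 1 - (C (Qv*qv)) + (C (Qv*qv)) * rescale qv (θν1 * θν⁻¹) := by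
  ext n
  cases n with
  | zero =>
    have h0 : (PowerSeries.coeff 0) (rescale qv (θν1 * θν⁻¹)) = 1 := by
      rw [coeff_rescale, pow_zero, one_mul, coeff_hs, μ_zero]
    simp only [W, coeff_mk, map_add, map_sub, coeff_C_mul, h0, w]
    simp
  | succ m =>
    have h1 : (PowerSeries.coeff (m+1)) (1 : PowerSeries K) = 0 := by
      simp
    simp only [W, coeff_mk, map_add, map_sub, coeff_C_mul, coeff_rescale, coeff_hs, h1, w]
    simp only [PowerSeries.coeff_C, if_neg (Nat.succ_ne_zero m), sub_zero, zero_sub]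
    ring

lemma rescale_θν_ne : rescale qv θν ≠ 0 := by
  intro h
  have h1 : constantCoeff (rescale qv θν) = 1 := by
    rw [← coeff_zero_eq_constantCoeff, coeff_rescale, pow_zero, one_mul,
      coeff_zero_eq_constantCoeff, const_θν]
  rw [h, map_zero] at h1
  exact one_ne_zero h1.symm

/-- The master q-Riccati equation. -/
lemma riccati :
    (C (1 - Qv*qv)) * ((θν1 * θν⁻¹) - 1 - (C (Qv*qv)) * (rescale qv (θν1 * θν⁻¹) - 1))
      = (C (Qv*(1-qv)^2)) * (X * ((θν1 * θν⁻¹) * W)) := by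
  have hfq : rescale qv (θν1*θν⁻¹) * rescale qv θν = rescale qv θν1 := by
    have h := congrArg (rescale qv) hs_mul
    rwa [map_mul] at h
  have hab : (C (1 - Qv*qv)) + C (Qv*qv) = 1 := by
    rw [← map_add, show (1 - Qv*qv) + Qv*qv = (1:K) by ring, map_one]
  apply mul_left_cancel₀ (mul_ne_zero θν_ne rescale_θν_ne)
  linear_combination (exp := 1)
    ((C (1 - Qv*qv)) * rescale qv θν + (C (Qv*qv)) * rescale qv θν1) * R1
    + ((C (1 - Qv*qv)) * rescale qv θν) * R4
    + ((C (1 - Qv*qv)) * rescale qv θν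
        - (C (Qv*(1-qv)^2)) * X * (1 - C (Qv*qv)) * rescale qv θν
        - (C (Qv*(1-qv)^2)) * X * (C (Qv*qv)) * rescale qv θν1
        - (C (Qv*(1-qv)^2)) * X * (C (Qv*qv))
            * (rescale qv (θν1*θν⁻¹) * rescale qv θν - rescale qv θν1)) * hs_mul
    + (-((C (1 - Qv*qv)) * (C (Qv*qv)) * θν)
        - (C (Qv*(1-qv)^2)) * X * (C (Qv*qv)) * θν1) * hfq
    + (-((C (Qv*(1-qv)^2)) * X * (θν1*θν⁻¹) * θν * rescale qv θν)) * W_eq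
    + ((C (1 - Qv*qv)) * θν * rescale qv θν
        - (C (1 - Qv*qv)) * rescale qv θν * rescale qv θν1
        + (C (Qv*(1-qv)^2)) * X * rescale qv θν * θν1) * hab

lemma coeff_W (n : ℕ) : PowerSeries.coeff n W = w n := coeff_mk _ _

/-- The scalar recurrence. -/
lemma recur (m : ℕ) :
    (1 - Qv*qv) * (1 - Qv*qv^(m+2)) * μ (m+1)
      = Qv*(1-qv)^2 * ∑ j ∈ Finset.range (m+1), μ j * w (m - j) := by
  have h := congrArg (PowerSeries.coeff (m+1)) riccati
  have h1 : (PowerSeries.coeff (m+1)) (1 : PowerSeries K) = 0 := by simp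
  rw [coeff_C_mul, coeff_C_mul, coeff_succ_X_mul, PowerSeries.coeff_mul,
    Finset.Nat.sum_antidiagonal_eq_sum_range_succ_mk] at h
  simp only [coeff_hs, coeff_W] at h
  simp only [mul_sub, sub_mul, map_sub, map_add, coeff_C_mul, coeff_rescale, coeff_hs, h1] at h
  linear_combination h

/-! ### Positivity induction -/

lemma div_add_div_le (a b k : ℕ) (hk : 0 < k) : a/k + b/k ≤ (a+b)/k := by
  rw [Nat.le_div_iff_mul_le hk, add_mul]
  exact Nat.add_le_add (Nat.div_mul_le_self a k) (Nat.div_mul_le_self b k)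

/-- The building block `[ν+k]_q` as a polynomial with `ℕ`-coefficients. -/
def pk (k : ℕ) : MvPolynomial (Fin 3) ℕ :=
  (∑ i ∈ Finset.range k, MvPolynomial.X 0 ^ i) + MvPolynomial.X 0 ^ k * MvPolynomial.X 2

lemma aeval_pk (k : ℕ) : MvPolynomial.aeval ![qv, Qv, brNu] (pk k) = brk k := by
  rw [pk, brk_eq]
  simp

lemma prod_Icc_ext (n s : ℕ) (hs : s ≤ n) :
    (∏ k ∈ Finset.Icc 1 s, brk k ^ (s/k)) = ∏ k ∈ Finset.Icc 1 n, brk k ^ (s/k) := by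
  refine Finset.prod_subset (Finset.Icc_subset_Icc_right hs) fun x hx hxs => ?_
  have h1 : 1 ≤ x := (Finset.mem_Icc.1 hx).1
  have h2 : s < x := by
    rcases Finset.mem_Icc.1 hx with ⟨ha, hb⟩
    by_contra hc
    exact hxs (Finset.mem_Icc.2 ⟨h1, by omega⟩)
  rw [Nat.div_eq_of_lt h2, pow_zero]

lemma Dpe (n j : ℕ) (hj : j < n) :
    (∏ k ∈ Finset.Icc 1 (n+1), brk k ^ ((n+1)/k))
      = brk (n+1) * (∏ k ∈ Finset.Icc 1 n, brk k ^ ((n+1)/k - (n-j)/k - (j+1)/k))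
        * (∏ k ∈ Finset.Icc 1 (n-j), brk k ^ ((n-j)/k))
        * (∏ k ∈ Finset.Icc 1 (j+1), brk k ^ ((j+1)/k)) := by
  have hsplit : ∏ k ∈ Finset.Icc 1 (n+1), brk k ^ ((n+1)/k)
      = (∏ k ∈ Finset.Icc 1 n, brk k ^ ((n+1)/k)) * brk (n+1) ^ ((n+1)/(n+1)) :=
    Finset.prod_Icc_succ_top (by omega) _
  rw [hsplit, Nat.div_self (by omega), pow_one]
  have hmain : (∏ k ∈ Finset.Icc 1 n, brk k ^ ((n+1)/k))
      = (∏ k ∈ Finset.Icc 1 n, brk k ^ ((n+1)/k - (n-j)/k - (j+1)/k))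
        * (∏ k ∈ Finset.Icc 1 n, brk k ^ ((n-j)/k))
        * (∏ k ∈ Finset.Icc 1 n, brk k ^ ((j+1)/k)) := by
    rw [← Finset.prod_mul_distrib, ← Finset.prod_mul_distrib]
    refine Finset.prod_congr rfl fun k hk => ?_
    rw [← pow_add, ← pow_add]
    congr 1
    have hk1 : 0 < k := (Finset.mem_Icc.1 hk).1
    have hle : (n-j)/k + (j+1)/k ≤ (n+1)/k := by
      have h2 : (n-j) + (j+1) = n+1 := by omega
      calc (n-j)/k + (j+1)/k ≤ ((n-j)+(j+1))/k := div_add_div_le _ _ _ hk1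
        _ = (n+1)/k := by rw [h2]
    omega
  rw [hmain, ← prod_Icc_ext n (n-j) (by omega), ← prod_Icc_ext n (j+1) (by omega)]
  ring

lemma brk_mul' (k : ℕ) : (1:K) - Qv * qv ^ k = brk k * (1 - qv) := (brk_mul k).symm

/-- The `q`-Kishore theorem for Hahn–Exton `q`-Bessel functions (Theorem 1.4, the
conjecture of Delest and Fédou): `μ_n ∏_{k=1}^{n+1} [ν+k]_q^{⌊(n+1)/k⌋}
= Q^n [ν+1]_q P_n(q, Q, [ν]_q)` for a polynomial `P_n` with nonnegative integer
coefficients. -/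
theorem q_kishore_hahn_exton (n : ℕ) :
    ∃ P : MvPolynomial (Fin 3) ℕ,
      μ n * ∏ k ∈ Finset.Icc 1 (n + 1), brk k ^ ((n + 1) / k)
        = Qv ^ n * brk 1 * MvPolynomial.aeval ![qv, Qv, brNu] P := by
  induction n using Nat.strong_induction_on with
  | _ n ih =>
  rcases n with _ | m
  · exact ⟨1, by simp [μ_zero]⟩
  · -- n = m+1
    set Pc : ℕ → MvPolynomial (Fin 3) ℕ :=
      fun j => if h : j < m+1 then (ih j h).choose else 1 with hPc
    have hA : ∀ j, j < m+1 → μ j * ∏ k ∈ Finset.Icc 1 (j+1), brk k ^ ((j+1)/k)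
        = Qv ^ j * brk 1 * MvPolynomial.aeval ![qv, Qv, brNu] (Pc j) := by
      intro j hj
      rw [hPc]
      simp only [dif_pos hj]
      exact (ih j hj).choose_spec
    clear hPc
    set cp : ℕ → MvPolynomial (Fin 3) ℕ :=
      fun i => if m - i = 0 then 1 else MvPolynomial.X 1 * MvPolynomial.X 0 ^ (m-i+1) with hcp
    set PB : ℕ → MvPolynomial (Fin 3) ℕ :=
      fun i => ∏ k ∈ Finset.Icc 1 (m+1), pk k ^ ((m+2)/k - (i+1)/k - (m-i+1)/k) with hPB
    refine ⟨∑ i ∈ Finset.range (m+1), cp i * Pc i * Pc (m-i) * PB i, ?_⟩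
    have hne : ((1:K) - Qv*qv) * (1 - Qv*qv^(m+2)) ≠ 0 :=
      mul_ne_zero (by simpa using one_sub_Qq_ne 1) (one_sub_Qq_ne (m+2))
    apply mul_left_cancel₀ hne
    calc (1 - Qv*qv) * (1 - Qv*qv^(m+2))
          * (μ (m+1) * ∏ k ∈ Finset.Icc 1 (m+1+1), brk k ^ ((m+1+1)/k))
        = ((1 - Qv*qv) * (1 - Qv*qv^(m+2)) * μ (m+1))
            * ∏ k ∈ Finset.Icc 1 (m+2), brk k ^ ((m+2)/k) := by ring_nf
      _ = (Qv*(1-qv)^2 * ∑ i ∈ Finset.range (m+1), μ i * w (m - i))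
            * ∏ k ∈ Finset.Icc 1 (m+2), brk k ^ ((m+2)/k) := by rw [recur m]
      _ = ∑ i ∈ Finset.range (m+1), (Qv*(1-qv)^2 * (μ i * w (m - i))
            * ∏ k ∈ Finset.Icc 1 (m+2), brk k ^ ((m+2)/k)) := by
          rw [Finset.mul_sum, Finset.sum_mul]
      _ = ∑ i ∈ Finset.range (m+1), ((1 - Qv*qv) * (1 - Qv*qv^(m+2))
            * (Qv^(m+1) * brk 1
                * MvPolynomial.aeval ![qv, Qv, brNu] (cp i * Pc i * Pc (m-i) * PB i))) := by
          refine Finset.sum_congr rfl fun i hi => ?_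
          have him : i < m+1 := Finset.mem_range.1 hi
          have hAi := hA i him
          have hDpe := Dpe (m+1) (m-i) (by omega)
          have hnmi : m + 1 - (m - i) = i + 1 := by omega
          rw [hnmi] at hDpe
          have haPB : MvPolynomial.aeval ![qv, Qv, brNu] (PB i)
              = ∏ k ∈ Finset.Icc 1 (m+1), brk k ^ ((m+2)/k - (i+1)/k - (m-i+1)/k) := by
            rw [hPB]
            simp only [map_prod, map_pow, aeval_pk]
          rw [map_mul, map_mul, map_mul, haPB]
          rcases Nat.eq_zero_or_pos (m - i) with hz | hpos
          · -- boundary term : i = m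
            have him' : i = m := by omega
            subst him'
            simp only [Nat.sub_self] at hDpe ⊢
            have hw : w 0 = 1 := rfl
            have hacp : MvPolynomial.aeval ![qv, Qv, brNu] (cp i) = 1 := by
              rw [hcp]; simp
            have hPc0 : MvPolynomial.aeval ![qv, Qv, brNu] (Pc 0) = 1 := by
              have h0 := hA 0 (by omega)
              rw [μ_zero] at h0
              rw [show (∏ k ∈ Finset.Icc 1 1, brk k ^ (1/k)) = brk 1 by simp] at h0
              refine (mul_left_cancel₀ (brk_ne 1) ?_).symm
              linear_combination h0
            rw [hw, hacp, hPc0, hDpe]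
            have hD1 : (∏ k ∈ Finset.Icc 1 (0+1), brk k ^ ((0+1)/k)) = brk 1 := by simp
            rw [show (1:K) - Qv*qv = brk 1 * (1-qv) by
                  rw [brk_mul 1, pow_one],
                show (1:K) - Qv*qv^(i+2) = brk (i+2) * (1-qv) from (brk_mul (i+2)).symm]
            rw [hD1, pow_succ]
            have hPP : (∏ x ∈ Finset.Icc 1 (i+1), brk x ^ ((i+1+1)/x - (i+1)/x - (0+1)/x))
                = ∏ k ∈ Finset.Icc 1 (i+1), brk k ^ ((i+2)/k - (i+1)/k - (i-i+1)/k) := by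
              refine Finset.prod_congr rfl fun k _ => ?_
              rw [show i+1+1 = i+2 from by omega, show i-i = 0 from by omega]
            rw [hPP]
            linear_combination (Qv*(1-qv)^2 * brk (i+1+1) * brk 1
              * (∏ k ∈ Finset.Icc 1 (i+1), brk k ^ ((i+2)/k - (i+1)/k - (i-i+1)/k))) * hAi
          · -- interior term
            obtain ⟨j', hj'⟩ : ∃ j', m - i = j' + 1 := ⟨m - i - 1, by omega⟩
            have hAj := hA (m-i) (by omega)
            have hw : w (m - i) = Qv * qv^(m-i+1) * μ (m-i) := by
              rw [hj']; rfl
            have hacp : MvPolynomial.aeval ![qv, Qv, brNu] (cp i)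
                = Qv * qv^(m-i+1) := by
              rw [hcp]
              simp only [hj']
              simp
            rw [hw, hacp, hDpe]
            rw [show (1:K) - Qv*qv = brk 1 * (1-qv) by
                  rw [brk_mul 1, pow_one],
                show (1:K) - Qv*qv^(m+2) = brk (m+2) * (1-qv) from (brk_mul (m+2)).symm]
            have hQpow : Qv^i * Qv^(m-i) = Qv^m := by
              rw [← pow_add]
              congr 1
              omega
            linear_combination
              (Qv*(1-qv)^2 * Qv * qv^(m-i+1) * brk (m+1+1)
                * (∏ k ∈ Finset.Icc 1 (m+1), brk k ^ ((m+2)/k - (i+1)/k - (m-i+1)/k))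
                * (μ (m-i) * ∏ k ∈ Finset.Icc 1 (m-i+1), brk k ^ ((m-i+1)/k))) * hAi
              + (Qv*(1-qv)^2 * Qv * qv^(m-i+1) * brk (m+1+1)
                * (∏ k ∈ Finset.Icc 1 (m+1), brk k ^ ((m+2)/k - (i+1)/k - (m-i+1)/k))
                * (Qv^i * brk 1 * MvPolynomial.aeval ![qv, Qv, brNu] (Pc i))) * hAj
              + ((1-qv)^2 * Qv * Qv * qv^(m-i+1) * brk (m+1+1) * brk 1 * brk 1
                * (∏ k ∈ Finset.Icc 1 (m+1), brk k ^ ((m+2)/k - (i+1)/k - (m-i+1)/k))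
                * MvPolynomial.aeval ![qv, Qv, brNu] (Pc i)
                * MvPolynomial.aeval ![qv, Qv, brNu] (Pc (m-i))) * hQpow
      _ = (1 - Qv*qv) * (1 - Qv*qv^(m+2))
            * (Qv^(m+1) * brk 1 * MvPolynomial.aeval ![qv, Qv, brNu]
                (∑ i ∈ Finset.range (m+1), cp i * Pc i * Pc (m-i) * PB i)) := by
          rw [map_sum, Finset.mul_sum, Finset.mul_sum]

end
end

section
/- For every n ≥ 1 there exists a polynomial P_n in three variables with nonnegative integer coefficients such that both μ_n · ∏_{k=1}^{n+1} [ν+k]_q^{⌊(n+1)/k⌋} = Q^n · [ν+1]_q · P_n(q, Q, [ν]_q) and σ(μ_n) · ∏_{k=1}^{n+1} [ν+k]_q^{⌊(n+1)/k⌋} = q · Q · [ν+1]_q · P_n(q, Q, [ν]_q) hold in K. Equivalently (Theorem 2.4): J_{ν+1}((1−q)z;q)/J_ν((1−q)z;q) = (1−q)z + ∑_{n≥1} (N_{n,ν}(q)/D_{n,ν}(q)) q^{n+ν} z^{2n−1}, where N_{n,ν}(q) and D_{n,ν}(q) = ∏_{k=1}^{n} [k+ν]_q^{⌊n/k⌋}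 are the same numerators and denominators as in the base-q^{−1} expansion of Theorem 1.4, and each N_{n,ν}(q) is a polynomial in q, q^ν and [ν]_q with nonnegative integer coefficients. -/
/- Let `K` be the fraction field of `ℚ[q,Q]`, where `Q` plays the role of `q^ν`.
`θν` and `θν1` are the series `θ_ν` and `θ_{ν+1}` of the Hahn–Exton `q`-Bessel
functions, and `μ n` are the coefficients of `θ_{ν+1}/θ_ν`. -/

noncomputable section

namespace QK

open Finset

lemma alg_ne {p : MvPolynomial (Fin 2) ℚ} (f : Fin 2 → ℚ) (hp : MvPolynomial.eval f p ≠ 0) :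
    algebraMap (MvPolynomial (Fin 2) ℚ) K p ≠ 0 := by
  intro h
  have h0 : p = 0 := IsFractionRing.injective (MvPolynomial (Fin 2) ℚ) K (by simpa using h)
  rw [h0] at hp; simp at hp

lemma qv_ne : qv ≠ 0 := by
  apply alg_ne (fun _ => 1); simp

lemma Qv_ne : Qv ≠ 0 := by
  apply alg_ne (fun _ => 1); simp

lemma one_sub_qv_pow_ne (m : ℕ) (hm : 1 ≤ m) : (1:K) - qv ^ m ≠ 0 := by
  have : (1:K) - qv ^ m
      = algebraMap (MvPolynomial (Fin 2) ℚ) K (1 - MvPolynomial.X 0 ^ m) := by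
    simp [qv, map_sub, map_pow]
  rw [this]
  apply alg_ne (fun _ => 0)
  simp [zero_pow (by omega : m ≠ 0)]

lemma one_sub_Qq_pow_ne (m : ℕ) : (1:K) - Qv * qv ^ m ≠ 0 := by
  have : (1:K) - Qv * qv ^ m
      = algebraMap (MvPolynomial (Fin 2) ℚ) K (1 - MvPolynomial.X 1 * MvPolynomial.X 0 ^ m) := by
    simp [qv, Qv, map_sub, map_pow, map_mul]
  rw [this]
  apply alg_ne (fun _ => 0)
  simp

lemma one_sub_qv_ne : (1:K) - qv ≠ 0 := by
  simpa using one_sub_qv_pow_ne 1 le_rfl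

lemma one_sub_Qq_pow_ne_one : (1:K) - Qv * qv ≠ 0 := by
  simpa using one_sub_Qq_pow_ne 1

lemma qPoch_succ (a : K) (n : ℕ) : qPoch a (n+1) = qPoch a n * (1 - a * qv ^ n) :=
  Finset.prod_range_succ _ n

lemma qPoch_zero (a : K) : qPoch a 0 = 1 := rfl

lemma qPoch_qv_ne (n : ℕ) : qPoch qv n ≠ 0 := by
  apply Finset.prod_ne_zero_iff.2
  intro j _
  have : (1:K) - qv * qv ^ j = 1 - qv ^ (j+1) := by ring
  rw [this]; exact one_sub_qv_pow_ne _ (by omega)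

lemma qPoch_Qq_ne (n : ℕ) : qPoch (Qv * qv) n ≠ 0 := by
  apply Finset.prod_ne_zero_iff.2
  intro j _
  have : (1:K) - Qv * qv * qv ^ j = 1 - Qv * qv ^ (j+1) := by ring
  rw [this]; exact one_sub_Qq_pow_ne _

lemma qPoch_Qq2_ne (n : ℕ) : qPoch (Qv * qv ^ 2) n ≠ 0 := by
  apply Finset.prod_ne_zero_iff.2
  intro j _
  have : (1:K) - Qv * qv ^ 2 * qv ^ j = 1 - Qv * qv ^ (j+2) := by ring
  rw [this]; exact one_sub_Qq_pow_ne _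

/-- coefficients of θν -/
def A (n : ℕ) : K :=
  (-1) ^ n * qv ^ (n * (n - 1) / 2) * Qv ^ n * (1 - qv) ^ (2 * n)
    / (qPoch qv n * qPoch (Qv * qv) n)

/-- coefficients of θν1 -/
def Bc (n : ℕ) : K :=
  (-1) ^ n * qv ^ (n * (n - 1) / 2) * (Qv * qv) ^ n * (1 - qv) ^ (2 * n)
    / (qPoch qv n * qPoch (Qv * qv ^ 2) n)

lemma tri (n : ℕ) : (n+1) * n / 2 = n * (n-1) / 2 + n := by
  cases n with
  | zero => rfl
  | succ k =>
    show (k+2) * (k+1) / 2 = (k+1) * k / 2 + (k+1)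
    have h : (k+2) * (k+1) = (k+1) * k + 2 * (k+1) := by ring
    rw [h, Nat.add_mul_div_left _ _ (by norm_num : 0 < 2)]

lemma A_zero : A 0 = 1 := by simp [A, qPoch_zero]

lemma Bc_zero : Bc 0 = 1 := by simp [Bc, qPoch_zero]

lemma A_succ (n : ℕ) :
    A (n+1) * ((1 - qv ^ (n+1)) * (1 - Qv * qv ^ (n+1)))
      = -(A n * (qv ^ n * Qv * (1 - qv) ^ 2)) := by
  have e1 : (n+1) * ((n+1) - 1) / 2 = n * (n-1) / 2 + n := by
    simpa using tri n
  rw [A, A, qPoch_succ, qPoch_succ, e1]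
  have h1 := qPoch_qv_ne n
  have h2 := qPoch_Qq_ne n
  have h3 : (1:K) - qv * qv ^ n ≠ 0 := by
    have : (1:K) - qv * qv ^ n = 1 - qv ^ (n+1) := by ring
    rw [this]; exact one_sub_qv_pow_ne _ (by omega)
  have h4 : (1:K) - Qv * qv * qv ^ n ≠ 0 := by
    have : (1:K) - Qv * qv * qv ^ n = 1 - Qv * qv ^ (n+1) := by ring
    rw [this]; exact one_sub_Qq_pow_ne _
  rw [show (1:K) - qv * qv ^ n = 1 - qv ^ (n+1) by ring,
    show (1:K) - Qv * qv * qv ^ n = 1 - Qv * qv ^ (n+1) by ring]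
  have h3' := one_sub_qv_pow_ne (n+1) (by omega)
  have h4' := one_sub_Qq_pow_ne (n+1)
  generalize qPoch qv n = P1 at h1 ⊢
  generalize qPoch (Qv * qv) n = P2 at h2 ⊢
  generalize (1:K) - qv ^ (n+1) = a1 at h3' ⊢
  generalize (1:K) - Qv * qv ^ (n+1) = b1 at h4' ⊢
  field_simp
  ring

lemma Bc_succ (n : ℕ) :
    Bc (n+1) * ((1 - qv ^ (n+1)) * (1 - Qv * qv ^ (n+2)))
      = -(Bc n * (qv ^ n * (Qv * qv) * (1 - qv) ^ 2)) := by
  have e1 : (n+1) * ((n+1) - 1) / 2 = n * (n-1) / 2 + n := by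
    simpa using tri n
  rw [Bc, Bc, qPoch_succ, qPoch_succ, e1]
  have h1 := qPoch_qv_ne n
  have h2 := qPoch_Qq2_ne n
  have h3 : (1:K) - qv * qv ^ n ≠ 0 := by
    have : (1:K) - qv * qv ^ n = 1 - qv ^ (n+1) := by ring
    rw [this]; exact one_sub_qv_pow_ne _ (by omega)
  have h4 : (1:K) - Qv * qv ^ 2 * qv ^ n ≠ 0 := by
    have : (1:K) - Qv * qv ^ 2 * qv ^ n = 1 - Qv * qv ^ (n+2) := by ring
    rw [this]; exact one_sub_Qq_pow_ne _
  field_simp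
  ring


lemma A_ne (n : ℕ) : A n ≠ 0 := by
  apply div_ne_zero
  · apply mul_ne_zero; apply mul_ne_zero; apply mul_ne_zero
    · exact pow_ne_zero _ (by norm_num)
    · exact pow_ne_zero _ qv_ne
    · exact pow_ne_zero _ Qv_ne
    · exact pow_ne_zero _ one_sub_qv_ne
  · exact mul_ne_zero (qPoch_qv_ne n) (qPoch_Qq_ne n)

/-- Relation R1 : `b_n (1 - Q q^{n+1}) = (1 - Qq) q^n a_n`. -/
lemma R1 : ∀ n : ℕ, Bc n * (1 - Qv * qv ^ (n+1)) = (1 - Qv * qv) * qv ^ n * A n := by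
  intro n
  induction n with
  | zero => simp [A_zero, Bc_zero]
  | succ n IH =>
    have hA := A_succ n
    have hB := Bc_succ n
    have hz : ((1:K) - qv ^ (n+1)) * (1 - Qv * qv ^ (n+1)) ≠ 0 :=
      mul_ne_zero (one_sub_qv_pow_ne _ (by omega)) (one_sub_Qq_pow_ne _)
    apply mul_right_cancel₀ hz
    linear_combination (1 - Qv * qv ^ (n+1)) * hB
      - (qv ^ n * (Qv * qv) * (1 - qv) ^ 2) * IH
      - ((1 - Qv * qv) * qv ^ (n+1)) * hA

/-- Relation D1 : `a_{n+1} (1 - q^{n+1}) (1 - Qq) = - Q (1-q)^2 b_n`. -/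
lemma D1 (n : ℕ) :
    A (n+1) * (1 - qv ^ (n+1)) * (1 - Qv * qv) = -(Qv * (1 - qv) ^ 2 * Bc n) := by
  have hA := A_succ n
  have hR := R1 n
  have hz : (1:K) - Qv * qv ^ (n+1) ≠ 0 := one_sub_Qq_pow_ne _
  apply mul_right_cancel₀ hz
  linear_combination (1 - Qv * qv) * hA + (Qv * (1 - qv) ^ 2) * hR


open PowerSeries

lemma coeff_θν (n : ℕ) : coeff n θν = A n := by
  rw [θν, coeff_mk]; rfl

lemma coeff_θν1 (n : ℕ) : coeff n θν1 = Bc n := by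
  rw [θν1, coeff_mk]; rfl

lemma constCoeff_θν : constantCoeff θν ≠ 0 := by
  have : constantCoeff θν = A 0 := by rw [← coeff_zero_eq_constantCoeff, coeff_θν]
  rw [this, A_zero]; norm_num

def g : PowerSeries K := θν1 * θν⁻¹

lemma coeff_g (n : ℕ) : coeff n g = μ n := rfl

lemma hgθ : g * θν = θν1 := by
  have h := PowerSeries.inv_mul_cancel (φ := θν) constCoeff_θν
  calc g * θν = θν1 * (θν⁻¹ * θν) := by rw [g]; ring
  _ = θν1 := by rw [h, mul_one]

lemma mu_zero : μ 0 = 1 := by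
  have : μ 0 = constantCoeff g := by rw [← coeff_g, coeff_zero_eq_constantCoeff]
  rw [this, g, map_mul, PowerSeries.constantCoeff_inv]
  have h1 : constantCoeff θν1 = Bc 0 := by
    rw [← coeff_zero_eq_constantCoeff, coeff_θν1]
  have h2 : constantCoeff θν = A 0 := by
    rw [← coeff_zero_eq_constantCoeff, coeff_θν]
  rw [h1, h2, A_zero, Bc_zero, inv_one, mul_one]

lemma S1 : θν1 = C (1 - Qv*qv) * rescale qv θν + C (Qv*qv) * rescale qv θν1 := by
  ext n
  simp only [map_add, coeff_C_mul, coeff_rescale, coeff_θν, coeff_θν1]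
  linear_combination R1 n

/-- the constant `c = Q(1-q)^2/(1-Qq)` -/
def cK : K := Qv * (1 - qv)^2 / (1 - Qv*qv)

lemma hcK : cK * (1 - Qv*qv) = Qv * (1 - qv)^2 :=
  div_mul_cancel₀ _ one_sub_Qq_pow_ne_one

lemma S2 : rescale qv θν = θν + C cK * (X * θν1) := by
  ext n
  cases n with
  | zero =>
    have h1 : (coeff 0) (rescale qv θν) = A 0 := by
      rw [coeff_rescale, coeff_θν, pow_zero, one_mul]
    have h2 : (coeff 0) (C cK * (X * θν1)) = 0 := by
      rw [coeff_C_mul, coeff_zero_eq_constantCoeff, map_mul, constantCoeff_X, zero_mul, mul_zero]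
    rw [map_add, h1, h2, coeff_θν, add_zero]
  | succ n =>
    simp only [map_add, coeff_C_mul, coeff_rescale, coeff_θν, coeff_succ_X_mul, coeff_θν1]
    apply mul_right_cancel₀ (one_sub_Qq_pow_ne 1)
    have hD := D1 n
    have hc := hcK
    linear_combination (-1 : K) * hD - Bc n * hc

lemma FE : g = (C (1 - Qv*qv) + C (Qv*qv) * rescale qv g)
    * (1 + C cK * (X * g)) := by
  have hθν_ne : θν ≠ 0 := by
    intro h; exact constCoeff_θν (by rw [h, map_zero])
  apply mul_right_cancel₀ hθν_ne
  have hresc : rescale qv θν1 = rescale qv g * rescale qv θν := by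
    rw [← map_mul, hgθ]
  calc g * θν = θν1 := hgθ
  _ = C (1 - Qv*qv) * rescale qv θν + C (Qv*qv) * (rescale qv g * rescale qv θν) := by
      rw [S1, hresc]
  _ = (C (1 - Qv*qv) + C (Qv*qv) * rescale qv g) * rescale qv θν := by ring
  _ = (C (1 - Qv*qv) + C (Qv*qv) * rescale qv g) * (θν + C cK * (X * (g * θν))) := by
      rw [S2, hgθ]
  _ = (C (1 - Qv*qv) + C (Qv*qv) * rescale qv g) * (1 + C cK * (X * g)) * θν := by
      ring

lemma mu_rec (n : ℕ) :
    μ (n+1) * ((1 - Qv*qv^(n+2)) * (1 - Qv*qv))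
      = Qv*(1-qv)^2*(1-Qv*qv)*μ n
        + Qv^2*qv*(1-qv)^2 * ∑ i ∈ range (n+1), qv^i * μ i * μ (n-i) := by
  have hexp : g = C (1 - Qv*qv) + C ((1 - Qv*qv)*cK) * (X*g)
      + C (Qv*qv) * rescale qv g + C ((Qv*qv)*cK) * (X*(rescale qv g * g)) := by
    nth_rewrite 1 [FE]
    simp only [map_mul]
    ring
  have e1 : coeff (n+1) (X*g) = μ n := by rw [coeff_succ_X_mul, coeff_g]
  have e2 : coeff (n+1) (rescale qv g) = qv^(n+1) * μ (n+1) := by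
    rw [coeff_rescale, coeff_g]
  have e3 : coeff (n+1) (X*(rescale qv g * g)) = ∑ i ∈ range (n+1), qv^i * μ i * μ (n-i) := by
    rw [coeff_succ_X_mul, coeff_mul, Finset.Nat.sum_antidiagonal_eq_sum_range_succ_mk]
    apply Finset.sum_congr rfl
    intro i _
    rw [coeff_rescale, coeff_g, coeff_g]
  have e4 : coeff (n+1) (C (1-Qv*qv)) = (0:K) := by rw [coeff_C]; simp
  have h := congrArg (coeff (n+1)) hexp
  rw [map_add, map_add, map_add, coeff_C_mul, coeff_C_mul, coeff_C_mul, e1, e2, e3, e4,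
    coeff_g] at h
  have hc := hcK
  linear_combination (1 - Qv*qv) * h
    + ((1 - Qv*qv) * μ n + Qv*qv * (∑ i ∈ range (n+1), qv^i * μ i * μ (n-i))) * hc


section Sigma
variable (σ : K ≃+* K) (hq : σ qv = qv⁻¹) (hQ : σ Qv = Qv⁻¹)
include hq hQ

lemma sigma_A : ∀ n : ℕ, σ (A n) * Qv ^ n = A n := by
  intro n
  induction n with
  | zero => simp [A_zero]
  | succ n IH =>
    have hA := A_succ n
    have hσ := congrArg σ hA
    simp only [map_mul, map_neg, map_sub, map_one, map_pow, hq, hQ, inv_pow] at hσ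
    field_simp [qv_ne, Qv_ne] at hσ
    have hW : ((1 - qv^(n+1)) * (1 - Qv*qv^(n+1))) * (qv^n*Qv*qv^2) ≠ 0 := by
      apply mul_ne_zero
      · exact mul_ne_zero (one_sub_qv_pow_ne _ (by omega)) (one_sub_Qq_pow_ne _)
      · exact mul_ne_zero (mul_ne_zero (pow_ne_zero _ qv_ne) Qv_ne) (pow_ne_zero _ qv_ne)
    apply mul_right_cancel₀ hW
    linear_combination Qv*Qv^(n+1) * hσ - (Qv^2*qv^(2*n+2)*(1-qv)^2) * IH
      - (qv^n*Qv*qv^2) * hA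

lemma sigma_Bc : ∀ n : ℕ, σ (Bc n) * (qv*Qv) ^ n = Bc n := by
  intro n
  induction n with
  | zero => simp [Bc_zero]
  | succ n IH =>
    have hB := Bc_succ n
    have hσ := congrArg σ hB
    simp only [map_mul, map_neg, map_sub, map_one, map_pow, hq, hQ, inv_pow] at hσ
    field_simp [qv_ne, Qv_ne] at hσ
    have hW : ((1 - qv^(n+1)) * (1 - Qv*qv^(n+2))) * (qv^n*(Qv*qv)*qv^2) ≠ 0 := by
      apply mul_ne_zero
      · exact mul_ne_zero (one_sub_qv_pow_ne _ (by omega)) (one_sub_Qq_pow_ne _)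
      · exact mul_ne_zero (mul_ne_zero (pow_ne_zero _ qv_ne) (mul_ne_zero Qv_ne qv_ne))
          (pow_ne_zero _ qv_ne)
    apply mul_right_cancel₀ hW
    linear_combination Qv*(qv*Qv)^(n+1) * hσ - ((qv*Qv)^2*qv^(2*n+2)*(1-qv)^2) * IH
      - (qv^n*(Qv*qv)*qv^2) * hB


lemma map_θν : PowerSeries.map (σ : K →+* K) θν = rescale Qv⁻¹ θν := by
  ext n
  rw [coeff_map, coeff_rescale, coeff_θν]
  have h := sigma_A σ hq hQ n
  rw [inv_pow]
  field_simp [Qv_ne]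
  simp only [RingHom.coe_coe]
  linear_combination h

lemma map_θν1 : PowerSeries.map (σ : K →+* K) θν1 = rescale (qv⁻¹ * Qv⁻¹) θν1 := by
  ext n
  rw [coeff_map, coeff_rescale, coeff_θν1]
  have h := sigma_Bc σ hq hQ n
  rw [mul_pow, inv_pow, inv_pow]
  field_simp [qv_ne, Qv_ne]
  simp only [RingHom.coe_coe]
  linear_combination h

lemma FEσ : PowerSeries.map (σ : K →+* K) g
    = C (1 - Qv*qv) + C (Qv*qv) * rescale Qv⁻¹ g := by
  have h1 : PowerSeries.map (σ : K →+* K) g * rescale Qv⁻¹ θν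
      = rescale (qv⁻¹ * Qv⁻¹) θν1 := by
    rw [← map_θν σ hq hQ, ← map_θν1 σ hq hQ, ← _root_.map_mul, hgθ]
  have h3 : rescale (qv⁻¹ * Qv⁻¹) θν1
      = C (1 - Qv*qv) * rescale Qv⁻¹ θν + C (Qv*qv) * rescale Qv⁻¹ θν1 := by
    ext n
    simp only [map_add, coeff_C_mul, coeff_rescale, coeff_θν, coeff_θν1]
    have hR := R1 n
    rw [mul_pow, inv_pow, inv_pow]
    field_simp [qv_ne, Qv_ne]
    linear_combination hR
  have h4 : rescale Qv⁻¹ θν1 = rescale Qv⁻¹ g * rescale Qv⁻¹ θν := by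
    rw [← _root_.map_mul, hgθ]
  have hR_ne : rescale Qv⁻¹ θν ≠ 0 := by
    intro h
    have : constantCoeff (rescale Qv⁻¹ θν) = A 0 := by
      rw [← coeff_zero_eq_constantCoeff, coeff_rescale, coeff_θν, pow_zero, one_mul]
    rw [h, map_zero, A_zero] at this
    norm_num at this
  apply mul_right_cancel₀ hR_ne
  rw [h1, h3, h4]
  ring

lemma sigma_mu (n : ℕ) (hn : 1 ≤ n) : σ (μ n) * Qv ^ n = qv * Qv * μ n := by
  obtain ⟨m, rfl⟩ : ∃ m, n = m + 1 := ⟨n - 1, by omega⟩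
  have h := congrArg (coeff (m+1)) (FEσ σ hq hQ)
  rw [map_add, coeff_map, coeff_C_mul, coeff_rescale, coeff_g] at h
  simp only [coeff_C, Nat.succ_ne_zero, if_false, zero_add, RingHom.coe_coe] at h
  rw [h, inv_pow]
  have hQn : (Qv:K) ^ (m+1) ≠ 0 := pow_ne_zero _ Qv_ne
  have hinv : (Qv^(m+1))⁻¹ * Qv^(m+1) = (1:K) := inv_mul_cancel₀ hQn
  linear_combination (qv*Qv*μ (m+1)) * hinv

end Sigma

def Bpoly (k : ℕ) : MvPolynomial (Fin 3) ℕ :=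
  MvPolynomial.X 2 + MvPolynomial.X 1 * ∑ j ∈ range k, MvPolynomial.X 0 ^ j

def vK : Fin 3 → K := ![qv, Qv, brNu]

lemma aeval_Bpoly (k : ℕ) : MvPolynomial.aeval vK (Bpoly k) = brk k := by
  have : MvPolynomial.aeval vK (Bpoly k) = brNu + Qv * ∑ j ∈ range k, qv ^ j := by
    rw [Bpoly, map_add, map_mul, map_sum]
    simp [vK]
  rw [this]
  have hg : (∑ j ∈ range k, qv^j) * (qv - 1) = qv^k - 1 := geom_sum_mul qv k
  rw [brk, brNu]
  rw [div_add' _ _ _ one_sub_qv_ne, div_eq_div_iff one_sub_qv_ne one_sub_qv_ne]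
  linear_combination (-(1-qv)) * Qv * hg

lemma brk_ne (k : ℕ) : brk k ≠ 0 :=
  div_ne_zero (one_sub_Qq_pow_ne k) one_sub_qv_ne

/-- The denominator product. -/
def Dd (n : ℕ) : K := ∏ k ∈ Icc 1 (n+1), brk k ^ ((n+1)/k)

def En (n : ℕ) : K := brk 1 ^ n * ∏ k ∈ Icc 2 n, brk k ^ ((n+1)/k)

def R1poly (n : ℕ) : MvPolynomial (Fin 3) ℕ :=
  ∏ k ∈ Icc 2 n, Bpoly k ^ ((n+1)/k - n/k)

def R2poly (n i : ℕ) : MvPolynomial (Fin 3) ℕ :=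
  ∏ k ∈ Icc 2 n, Bpoly k ^ ((n+1)/k - (i+1)/k - (n-i)/k)

lemma aeval_R1poly (n : ℕ) :
    MvPolynomial.aeval vK (R1poly n) = ∏ k ∈ Icc 2 n, brk k ^ ((n+1)/k - n/k) := by
  rw [R1poly, map_prod]
  exact Finset.prod_congr rfl fun k _ => by rw [map_pow, aeval_Bpoly]

lemma aeval_R2poly (n i : ℕ) :
    MvPolynomial.aeval vK (R2poly n i)
      = ∏ k ∈ Icc 2 n, brk k ^ ((n+1)/k - (i+1)/k - (n-i)/k) := by
  rw [R2poly, map_prod]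
  exact Finset.prod_congr rfl fun k _ => by rw [map_pow, aeval_Bpoly]

lemma Dd_split (n : ℕ) (hn : 1 ≤ n) : Dd n = brk (n+1) * brk 1 * En n := by
  rw [Dd, En]
  have e1 : Icc 1 (n+1) = insert 1 (insert (n+1) (Icc 2 n)) := by
    ext x; simp [mem_Icc, mem_insert]; omega
  rw [e1, Finset.prod_insert (by simp only [mem_insert, mem_Icc]; omega),
    Finset.prod_insert (by simp only [mem_Icc]; omega)]
  rw [Nat.div_one, Nat.div_self (by omega : 0 < n+1)]
  ring

lemma Dd_ext (i N : ℕ) (h : i + 1 ≤ N) :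
    Dd i = brk 1 ^ (i+1) * ∏ k ∈ Icc 2 N, brk k ^ ((i+1)/k) := by
  rw [Dd]
  have e1 : Icc 1 (i+1) = insert 1 (Icc 2 (i+1)) := by
    ext x; simp [mem_Icc, mem_insert]; omega
  rw [e1, Finset.prod_insert (by simp only [mem_Icc]; omega), Nat.div_one]
  congr 1
  apply Finset.prod_subset
  · exact Finset.Icc_subset_Icc (le_refl 2) h
  · intro x hx hnx
    simp only [mem_Icc] at hx hnx
    have : (i+1)/x = 0 := Nat.div_eq_of_lt (by omega)
    rw [this, pow_zero]

lemma En_eq (p : ℕ) :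
    En (p+1) = Dd p * MvPolynomial.aeval vK (R1poly (p+1)) := by
  rw [En, aeval_R1poly, Dd_ext p (p+1) le_rfl, mul_assoc, ← Finset.prod_mul_distrib]
  congr 1
  apply Finset.prod_congr rfl
  intro k _
  rw [← pow_add]
  congr 1
  have hle : (p+1)/k ≤ (p+1+1)/k := Nat.div_le_div_right (by omega)
  omega

lemma En_brk (m i : ℕ) (h1 : 1 ≤ i) (h2 : i ≤ m) :
    En (m+2) * brk 1
      = Dd i * Dd (m+1-i) * MvPolynomial.aeval vK (R2poly (m+2) i) := by
  rw [En, aeval_R2poly, Dd_ext i (m+2) (by omega), Dd_ext (m+1-i) (m+2) (by omega)]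
  have hj : (m+1-i)+1 = m+2-i := by omega
  rw [hj]
  have hpow : brk 1 ^ (m+2) * brk 1 = brk 1 ^ (i+1) * brk 1 ^ (m+2-i) := by
    rw [← pow_succ, ← pow_add]
    congr 1
    omega
  have hprod : ∏ k ∈ Icc 2 (m+2), brk k ^ ((m+2+1)/k)
      = (∏ k ∈ Icc 2 (m+2), brk k ^ ((i+1)/k)) * (∏ k ∈ Icc 2 (m+2), brk k ^ ((m+2-i)/k))
        * ∏ k ∈ Icc 2 (m+2), brk k ^ ((m+2+1)/k - (i+1)/k - ((m+2)-i)/k) := by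
    rw [← Finset.prod_mul_distrib, ← Finset.prod_mul_distrib]
    apply Finset.prod_congr rfl
    intro k _
    rw [← pow_add, ← pow_add]
    congr 1
    have hle : (i+1)/k + (m+2-i)/k ≤ (m+2+1)/k := by
      have h0 := Nat.add_div_le_add_div (i+1) (m+2-i) k
      have he : (i+1) + (m+2-i) = m+2+1 := by omega
      rw [he] at h0
      exact h0
    omega
  calc brk 1 ^ (m+2) * (∏ k ∈ Icc 2 (m+2), brk k ^ ((m+2+1)/k)) * brk 1
      = (brk 1 ^ (m+2) * brk 1) * (∏ k ∈ Icc 2 (m+2), brk k ^ ((m+2+1)/k)) := by ring_nf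
    _ = (brk 1 ^ (i+1) * brk 1 ^ (m+2-i)) * ((∏ k ∈ Icc 2 (m+2), brk k ^ ((i+1)/k))
          * (∏ k ∈ Icc 2 (m+2), brk k ^ ((m+2-i)/k))
          * ∏ k ∈ Icc 2 (m+2), brk k ^ ((m+2+1)/k - (i+1)/k - ((m+2)-i)/k)) := by
        rw [hpow, hprod]
    _ = brk 1 ^ (i+1) * (∏ k ∈ Icc 2 (m+2), brk k ^ ((i+1)/k))
          * (brk 1 ^ (m+2-i) * ∏ k ∈ Icc 2 (m+2), brk k ^ ((m+2-i)/k))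
          * ∏ k ∈ Icc 2 (m+2), brk k ^ ((m+2+1)/k - (i+1)/k - ((m+2)-i)/k) := by
        ring_nf

lemma mu_rec_brk (m : ℕ) :
    μ (m+1) * (brk (m+2) * brk 1)
      = Qv*(1-Qv*qv)*μ m
        + Qv^2*qv * ∑ i ∈ range (m+1), qv^i * μ i * μ (m-i) := by
  have hb1 : brk (m+2) * (1-qv) = 1 - Qv*qv^(m+2) := div_mul_cancel₀ _ one_sub_qv_ne
  have hb2 : brk 1 * (1-qv) = 1 - Qv*qv^1 := div_mul_cancel₀ _ one_sub_qv_ne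
  have hrec := mu_rec m
  apply mul_right_cancel₀ (pow_ne_zero 2 one_sub_qv_ne)
  linear_combination hrec + (μ (m+1) * brk 1 * (1-qv)) * hb1
    + (μ (m+1) * (1 - Qv*qv^(m+2))) * hb2


lemma part1 : ∀ n : ℕ, 1 ≤ n → ∃ P : MvPolynomial (Fin 3) ℕ,
    μ n * Dd n = Qv ^ n * brk 1 * MvPolynomial.aeval vK P := by
  intro n
  induction n using Nat.strong_induction_on with
  | _ n IH =>
  intro hn
  match n, hn, IH with
  | 1, _, _ =>
    refine ⟨1, ?_⟩
    have h : μ 1 * (brk 2 * brk 1)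
        = Qv*(1-Qv*qv)*μ 0 + Qv^2*qv * ∑ i ∈ range 1, qv^i * μ i * μ (0-i) :=
      mu_rec_brk 0
    rw [Finset.range_one, Finset.sum_singleton, mu_zero] at h
    simp only [pow_zero, one_mul, mul_one, Nat.zero_sub] at h
    have hD : Dd 1 = brk 1 ^ 2 * brk 2 := by
      rw [Dd]
      have e1 : Icc 1 2 = {1, 2} := rfl
      rw [e1, Finset.prod_insert (by decide), Finset.prod_singleton]
      norm_num
    rw [hD, map_one]
    linear_combination brk 1 * h
  | (m+2), _, IH =>
    have HC : ∀ i : ℕ, ∃ P : MvPolynomial (Fin 3) ℕ,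
        (1 ≤ i → i < m+2 → μ i * Dd i = Qv ^ i * brk 1 * MvPolynomial.aeval vK P) := by
      intro i
      by_cases hi : 1 ≤ i ∧ i < m+2
      · obtain ⟨P, hP⟩ := IH i hi.2 hi.1
        exact ⟨P, fun _ _ => hP⟩
      · exact ⟨1, fun h1 h2 => absurd ⟨h1, h2⟩ hi⟩
    choose Pf hPf using HC
    have hrec : μ (m+2) * (brk (m+3) * brk 1)
        = Qv*(1-Qv*qv)*μ (m+1)
          + Qv^2*qv * ∑ i ∈ range (m+2), qv^i * μ i * μ (m+1-i) :=
      mu_rec_brk (m+1)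
    have hsplit : ∑ i ∈ range (m+2), qv^i * μ i * μ (m+1-i)
        = μ (m+1) + qv^(m+1) * μ (m+1) + ∑ i ∈ Icc 1 m, qv^i * μ i * μ (m+1-i) := by
      have e1 : range (m+2) = insert 0 (insert (m+1) (Icc 1 m)) := by
        ext x; simp only [mem_range, mem_insert, mem_Icc]; omega
      rw [e1, Finset.sum_insert (by simp only [mem_insert, mem_Icc]; omega),
        Finset.sum_insert (by simp only [mem_Icc]; omega)]
      have e2 : m+1-(m+1) = 0 := by omega
      have e3 : m+1-0 = m+1 := by omega
      rw [e2, e3, mu_zero]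
      ring
    rw [hsplit] at hrec
    have hterm : ∀ i ∈ Icc 1 m, μ i * μ (m+1-i) * En (m+2)
        = Qv^(m+1) * brk 1 * (MvPolynomial.aeval vK (Pf i)
            * (MvPolynomial.aeval vK (Pf (m+1-i))
              * MvPolynomial.aeval vK (R2poly (m+2) i))) := by
      intro i hi
      rw [mem_Icc] at hi
      have hEb := En_brk m i hi.1 hi.2
      have hPi := hPf i hi.1 (by omega)
      have hPj := hPf (m+1-i) (by omega) (by omega)
      have hQpow : Qv^i * Qv^(m+1-i) = Qv^(m+1) := by
        rw [← pow_add]; congr 1; omega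
      apply mul_right_cancel₀ (brk_ne 1)
      calc μ i * μ (m+1-i) * En (m+2) * brk 1
          = (μ i * μ (m+1-i)) * (En (m+2) * brk 1) := by ring
        _ = (μ i * Dd i) * (μ (m+1-i) * Dd (m+1-i))
              * MvPolynomial.aeval vK (R2poly (m+2) i) := by rw [hEb]; ring
        _ = (Qv^i * brk 1 * MvPolynomial.aeval vK (Pf i))
              * (Qv^(m+1-i) * brk 1 * MvPolynomial.aeval vK (Pf (m+1-i)))
              * MvPolynomial.aeval vK (R2poly (m+2) i) := by rw [hPi, hPj]
        _ = Qv^(m+1) * brk 1 * (MvPolynomial.aeval vK (Pf i)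
              * (MvPolynomial.aeval vK (Pf (m+1-i))
                * MvPolynomial.aeval vK (R2poly (m+2) i))) * brk 1 := by
            linear_combination (brk 1 * brk 1 * MvPolynomial.aeval vK (Pf i)
              * MvPolynomial.aeval vK (Pf (m+1-i))
              * MvPolynomial.aeval vK (R2poly (m+2) i)) * hQpow
    have hP1 := hPf (m+1) (by omega) (by omega)
    have hE : En (m+2) = Dd (m+1) * MvPolynomial.aeval vK (R1poly (m+2)) :=
      En_eq (m+1)
    have hμE : μ (m+1) * En (m+2)
        = Qv^(m+1) * brk 1 * (MvPolynomial.aeval vK (Pf (m+1))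
            * MvPolynomial.aeval vK (R1poly (m+2))) := by
      rw [hE]
      linear_combination MvPolynomial.aeval vK (R1poly (m+2)) * hP1
    have hSE : (∑ i ∈ Icc 1 m, qv^i * μ i * μ (m+1-i)) * En (m+2)
        = Qv^(m+1) * brk 1 * ∑ i ∈ Icc 1 m, qv^i * (MvPolynomial.aeval vK (Pf i)
            * (MvPolynomial.aeval vK (Pf (m+1-i))
              * MvPolynomial.aeval vK (R2poly (m+2) i))) := by
      rw [Finset.sum_mul, Finset.mul_sum]
      apply Finset.sum_congr rfl
      intro i hi
      have h := hterm i hi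
      linear_combination qv^i * h
    refine ⟨(1 + MvPolynomial.X 1 * MvPolynomial.X 0 ^ (m+2))
        * (Pf (m+1) * R1poly (m+2))
      + ∑ i ∈ Icc 1 m, MvPolynomial.X 1 * MvPolynomial.X 0 ^ (i+1)
          * (Pf i * (Pf (m+1-i) * R2poly (m+2) i)), ?_⟩
    have hDs : Dd (m+2) = brk (m+3) * brk 1 * En (m+2) := Dd_split (m+2) (by omega)
    have haeval : MvPolynomial.aeval vK ((1 + MvPolynomial.X 1 * MvPolynomial.X 0 ^ (m+2))
          * (Pf (m+1) * R1poly (m+2))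
        + ∑ i ∈ Icc 1 m, MvPolynomial.X 1 * MvPolynomial.X 0 ^ (i+1)
            * (Pf i * (Pf (m+1-i) * R2poly (m+2) i)))
        = (1 + Qv * qv^(m+2)) * (MvPolynomial.aeval vK (Pf (m+1))
              * MvPolynomial.aeval vK (R1poly (m+2)))
          + Qv * qv * ∑ i ∈ Icc 1 m, qv^i * (MvPolynomial.aeval vK (Pf i)
              * (MvPolynomial.aeval vK (Pf (m+1-i))
                * MvPolynomial.aeval vK (R2poly (m+2) i))) := by
      rw [map_add, map_mul, map_mul, map_sum, Finset.mul_sum]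
      congr 1
      · congr 1
        rw [map_add, map_one, map_mul, map_pow]
        simp [vK]
      · apply Finset.sum_congr rfl
        intro i _
        simp only [map_mul, map_pow, MvPolynomial.aeval_X]
        have h0 : vK 1 = Qv := rfl
        have h1 : vK 0 = qv := rfl
        rw [h0, h1]
        ring
    rw [hDs, haeval]
    linear_combination En (m+2) * hrec + (Qv + Qv^2*qv^(m+2)) * hμE + Qv^2*qv * hSE

end QK

/-- Theorem 2.4, the `q`-Kishore theorem with the usual base `q`: the same numerator
polynomial `P_n` (with nonnegative integer coefficients) serves for both the base `q⁻¹`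
expansion (`μ_n`) and the base `q` expansion (`σ(μ_n)`), where `σ` is the field
automorphism of `K` with `σ(q) = q⁻¹`, `σ(Q) = Q⁻¹`. -/
theorem q_kishore_base_q (σ : K ≃+* K) (hq : σ qv = qv⁻¹) (hQ : σ Qv = Qv⁻¹) :
    ∀ n : ℕ, 1 ≤ n → ∃ P : MvPolynomial (Fin 3) ℕ,
      μ n * ∏ k ∈ Finset.Icc 1 (n + 1), brk k ^ ((n + 1) / k)
          = Qv ^ n * brk 1 * MvPolynomial.aeval ![qv, Qv, brNu] P ∧
      σ (μ n) * ∏ k ∈ Finset.Icc 1 (n + 1), brk k ^ ((n + 1) / k)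
          = qv * Qv * brk 1 * MvPolynomial.aeval ![qv, Qv, brNu] P := by
  intro n hn
  obtain ⟨P, hP⟩ := QK.part1 n hn
  have hP' : μ n * QK.Dd n = Qv ^ n * brk 1 * MvPolynomial.aeval ![qv, Qv, brNu] P := hP
  refine ⟨P, hP', ?_⟩
  have hs := QK.sigma_mu σ hq hQ n hn
  have hDD : (∏ k ∈ Finset.Icc 1 (n + 1), brk k ^ ((n + 1) / k)) = QK.Dd n := rfl
  rw [hDD]
  apply mul_right_cancel₀ (pow_ne_zero n QK.Qv_ne)
  linear_combination (QK.Dd n) * hs + qv * Qv * hP'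

end
end
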